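/- Let G : ℝ → ℝ be G(x) = exp(−|x|)/2, fix c ∈ ℝ, and let φ : ℝ → ℝ be twice continuously differentiable with φ, φ′, φ″ integrable on ℝ and φ(x), φ′(x), φ″(x) → 0 as |x| → ∞. Then the nonlocal equation cφ(x) − φ(x)²/2 = (G * φ)(x) for all x ∈ ℝ holds if and only if the local equation cφ(x) − φ(x)²/2 − cφ″(x) + φ(x)φ″(x) + (φ′(x))² = φ(x) for all x ∈ ℝ holds. -/

import Mathlib

open MeasureTheory Real Filter

private lemma myIoiSub {f : ℝ → ℝ} {a b : ℝ}
    (ha : IntegrableOn f (Set.Ioi a)) (hb : IntegrableOn f (Set.Ioi b)) :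
    (∫ x in Set.Ioi a, f x) - ∫ x in Set.Ioi b, f x = ∫ x in a..b, f x := by
  wlog hab : a ≤ b generalizing a b
  · rw [intervalIntegral.integral_symm, ← this hb ha (le_of_not_ge hab), neg_sub]
  rw [sub_eq_iff_eq_add, intervalIntegral.integral_of_le hab,
    ← setIntegral_union (Set.Ioc_disjoint_Ioi le_rfl) measurableSet_Ioi
      (ha.mono_set Set.Ioc_subset_Ioi_self) hb, Set.Ioc_union_Ioi_eq_Ioi hab]

private lemma myBdd {f : ℝ → ℝ} (hf : Continuous f)
    (h : Tendsto f (cocompact ℝ) (nhds 0)) : ∃ M, ∀ x, |f x| ≤ M := by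
  have h1 : {y : ℝ | |y| ≤ 1} ∈ nhds (0 : ℝ) :=
    Filter.mem_of_superset (Metric.closedBall_mem_nhds 0 one_pos)
      (fun y hy => by simpa [Real.dist_eq] using hy)
  obtain ⟨K, hK, hsub⟩ := Filter.mem_cocompact.1 (h h1)
  obtain ⟨C, hC⟩ := hK.exists_bound_of_continuousOn hf.continuousOn
  refine ⟨max C 1, fun x => ?_⟩
  by_cases hx : x ∈ K
  · exact le_max_of_le_left (by simpa using hC x hx)
  · exact le_max_of_le_right (hsub hx)

private lemma expODE {g : ℝ → ℝ} (hg : ∀ x, HasDerivAt g (g x) x) {M : ℝ}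
    (hb : ∀ x, |g x| ≤ M) : ∀ x, g x = 0 := by
  have hk : ∀ x, HasDerivAt (fun y => g y * exp (-y)) 0 x := fun x => by
    have h := (hg x).mul ((hasDerivAt_neg x).exp)
    exact h.congr_deriv (by ring)
  have hconst : ∀ x, g x * exp (-x) = g 0 * exp (-0) := fun x =>
    is_const_of_deriv_eq_zero (fun y => (hk y).differentiableAt) (fun y => (hk y).deriv) x 0
  have hgx : ∀ x, g x = g 0 * exp x := fun x => by
    have h := hconst x
    rw [neg_zero, Real.exp_zero, mul_one] at h
    have e1 : exp (-x) * exp x = 1 := by rw [← Real.exp_add]; simp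
    calc g x = g x * exp (-x) * exp x := by rw [mul_assoc, e1, mul_one]
    _ = g 0 * exp x := by rw [h]
  have h0 : g 0 = 0 := by
    by_contra h0
    have hpos : 0 < |g 0| := abs_pos.2 h0
    have ht : Tendsto (fun x => |g 0| * exp x) atTop atTop :=
      Real.tendsto_exp_atTop.const_mul_atTop hpos
    obtain ⟨x, hx⟩ := (ht.eventually (eventually_gt_atTop M)).exists
    have hbx := hb x
    rw [hgx x, abs_mul, abs_exp] at hbx
    linarith
  intro x
  rw [hgx x, h0, zero_mul]

private lemma odeZero {v v1 : ℝ → ℝ} {M : ℝ}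
    (hv : ∀ x, HasDerivAt v (v1 x) x) (hv1 : ∀ x, HasDerivAt v1 (v x) x)
    (hbv : ∀ x, |v x| ≤ M) (hbv1 : ∀ x, |v1 x| ≤ M) : ∀ x, v x = 0 := by
  have hg : ∀ x, HasDerivAt (fun y => v1 y + v y) (v1 x + v x) x := fun x => by
    exact ((hv1 x).add (hv x)).congr_deriv (by ring)
  have hgz : ∀ x, v1 x + v x = 0 :=
    expODE hg (M := 2 * M) (fun x => (abs_add_le _ _).trans (by linarith [hbv x, hbv1 x]))
  have hv' : ∀ x, HasDerivAt v (-(v x)) x := fun x => by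
    have h := hv x
    rw [show v1 x = -v x by linarith [hgz x]] at h
    exact h
  have hG : ∀ x, HasDerivAt (fun y => v (-y)) (v (-x)) x := fun x => by
    have h := (hv' (-x)).comp x (hasDerivAt_neg x)
    exact h.congr_deriv (by ring)
  have hz := expODE hG (M := M) (fun x => hbv (-x))
  intro x
  simpa using hz (-x)


noncomputable def AA (φ : ℝ → ℝ) (x : ℝ) : ℝ := ∫ s in Set.Iic x, exp s * φ s
noncomputable def BB (φ : ℝ → ℝ) (x : ℝ) : ℝ := ∫ s in Set.Ioi x, exp (-s) * φ s
noncomputable def ww (φ : ℝ → ℝ) (x : ℝ) : ℝ := (exp (-x) * AA φ x + exp x * BB φ x) / 2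
noncomputable def ww1 (φ : ℝ → ℝ) (x : ℝ) : ℝ := (-(exp (-x)) * AA φ x + exp x * BB φ x) / 2

variable {φ : ℝ → ℝ}

private lemma hIA (hc : Continuous φ) (h1 : Integrable φ) (x : ℝ) : IntegrableOn (fun s => exp s * φ s) (Set.Iic x) := by
  refine Integrable.mono (h1.restrict.const_mul (exp x))
    ((Real.continuous_exp.mul hc).aestronglyMeasurable.restrict) ?_
  refine (ae_restrict_iff' measurableSet_Iic).2 (Eventually.of_forall fun s hs => ?_)
  simp only [norm_mul, Real.norm_eq_abs, abs_exp]
  exact mul_le_mul_of_nonneg_right (exp_le_exp.2 hs) (abs_nonneg _)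

private lemma hIB (hc : Continuous φ) (h1 : Integrable φ) (x : ℝ) : IntegrableOn (fun s => exp (-s) * φ s) (Set.Ioi x) := by
  refine Integrable.mono (h1.restrict.const_mul (exp (-x)))
    (((Real.continuous_exp.comp continuous_neg).mul hc).aestronglyMeasurable.restrict) ?_
  refine (ae_restrict_iff' measurableSet_Ioi).2 (Eventually.of_forall fun s hs => ?_)
  simp only [norm_mul, Real.norm_eq_abs, abs_exp]
  exact mul_le_mul_of_nonneg_right (exp_le_exp.2 (neg_le_neg (le_of_lt hs))) (abs_nonneg _)

private lemma hIw (hc : Continuous φ) (h1 : Integrable φ) (x : ℝ) : Integrable (fun s => exp (-|x - s|) / 2 * φ s) := by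
  refine h1.mono ((((continuous_const.sub continuous_id).abs.neg.rexp.div_const 2)).aestronglyMeasurable.mul h1.aestronglyMeasurable) (Eventually.of_forall fun s => ?_)
  simp only [norm_mul, Real.norm_eq_abs, abs_div, abs_exp]
  have h01 : exp (-|x - s|) ≤ 1 := exp_le_one_iff.2 (neg_nonpos.2 (abs_nonneg _))
  have h02 : (0:ℝ) < exp (-|x - s|) := exp_pos _
  have := abs_nonneg (φ s)
  rw [abs_two]
  nlinarith

private lemma hwW (hc : Continuous φ) (h1 : Integrable φ) (x : ℝ) : (∫ s, exp (-|x - s|) / 2 * φ s) = ww φ x := by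
  rw [← intervalIntegral.integral_Iic_add_Ioi (b := x) ((hIw hc h1 x).integrableOn) ((hIw hc h1 x).integrableOn)]
  have hL : ∫ s in Set.Iic x, exp (-|x - s|) / 2 * φ s
      = exp (-x) / 2 * AA φ x := by
    rw [AA, ← integral_const_mul]
    refine setIntegral_congr_fun measurableSet_Iic fun s hs => ?_
    have habs : |x - s| = x - s := abs_of_nonneg (by simpa using hs)
    rw [habs, show -(x - s) = -x + s by ring, Real.exp_add]
    ring
  have hR : ∫ s in Set.Ioi x, exp (-|x - s|) / 2 * φ s
      = exp x / 2 * BB φ x := by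
    rw [BB, ← integral_const_mul]
    refine setIntegral_congr_fun measurableSet_Ioi fun s hs => ?_
    have habs : |x - s| = -(x - s) := abs_of_nonpos (by simp at hs ⊢; linarith)
    rw [habs, show -(-(x - s)) = x + -s by ring, Real.exp_add]
    ring
  rw [hL, hR, ww]
  ring

private lemma hIIA (hc : Continuous φ) (h1 : Integrable φ) (x : ℝ) : IntervalIntegrable (fun s => exp s * φ s) volume 0 x := by
  rw [intervalIntegrable_iff]
  exact (hIA hc h1 (max 0 x)).mono_set fun s hs => hs.2

private lemma hIIB (hc : Continuous φ) (h1 : Integrable φ) (x : ℝ) : IntervalIntegrable (fun s => exp (-s) * φ s) volume 0 x := by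
  rw [intervalIntegrable_iff]
  exact (hIB hc h1 (min 0 x)).mono_set fun s hs => hs.1

private lemma hA (hc : Continuous φ) (h1 : Integrable φ) (x : ℝ) : HasDerivAt (AA φ) (exp x * φ x) x := by
  have hAeq : ∀ y : ℝ, AA φ y = AA φ 0 + ∫ t in (0:ℝ)..y, exp t * φ t := fun y => by
    rw [← intervalIntegral.integral_Iic_sub_Iic (hIA hc h1 0) (hIA hc h1 y)]
    unfold AA; ring
  have h := (intervalIntegral.integral_hasDerivAt_right (hIIA hc h1 x)
    ((Real.continuous_exp.mul hc).stronglyMeasurableAtFilter _ _)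
    (Real.continuous_exp.mul hc).continuousAt).const_add (AA φ 0)
  rw [funext hAeq]
  exact h

private lemma hB (hc : Continuous φ) (h1 : Integrable φ) (x : ℝ) : HasDerivAt (BB φ) (-(exp (-x) * φ x)) x := by
  have hBeq : ∀ y : ℝ, BB φ y = BB φ 0 - ∫ t in (0:ℝ)..y, exp (-t) * φ t := fun y => by
    rw [← myIoiSub (hIB hc h1 0) (hIB hc h1 y)]
    unfold BB; ring
  have h := (intervalIntegral.integral_hasDerivAt_right (hIIB hc h1 x)
    (((Real.continuous_exp.comp continuous_neg).mul hc).stronglyMeasurableAtFilter _ _)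
    ((Real.continuous_exp.comp continuous_neg).mul hc).continuousAt).const_sub (BB φ 0)
  rw [funext hBeq]
  exact h

private lemma hexpneg (x : ℝ) : HasDerivAt (fun y : ℝ => exp (-y)) (-exp (-x)) x := by
  have h := (hasDerivAt_neg x).exp
  convert h using 1
  ring

private lemma hw (hc : Continuous φ) (h1 : Integrable φ) (x : ℝ) :
    HasDerivAt (ww φ) (ww1 φ x) x := by
  have hd := (((hexpneg x).mul (hA hc h1 x)).add
    ((Real.hasDerivAt_exp x).mul (hB hc h1 x))).div_const 2
  have : HasDerivAt (fun y => (exp (-y) * AA φ y + exp y * BB φ y) / 2) (ww1 φ x) x := by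
    refine hd.congr_deriv ?_
    have e1 : exp (-x) * (exp x * φ x) = φ x := by rw [← mul_assoc, ← Real.exp_add]; simp
    have e2 : exp x * (exp (-x) * φ x) = φ x := by rw [← mul_assoc, ← Real.exp_add]; simp
    rw [ww1]
    linear_combination (e1 - e2) / 2
  exact this

private lemma hw1 (hc : Continuous φ) (h1 : Integrable φ) (x : ℝ) :
    HasDerivAt (ww1 φ) (ww φ x - φ x) x := by
  have hd := ((((hexpneg x).neg).mul (hA hc h1 x)).add
    ((Real.hasDerivAt_exp x).mul (hB hc h1 x))).div_const 2
  have : HasDerivAt (fun y => (-(exp (-y)) * AA φ y + exp y * BB φ y) / 2)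
      (ww φ x - φ x) x := by
    refine hd.congr_deriv ?_
    have e1 : exp (-x) * (exp x * φ x) = φ x := by rw [← mul_assoc, ← Real.exp_add]; simp
    have e2 : exp x * (exp (-x) * φ x) = φ x := by rw [← mul_assoc, ← Real.exp_add]; simp
    rw [ww, Pi.neg_apply]
    linear_combination -(e1 + e2) / 2
  exact this

private lemma hAb (hc : Continuous φ) (h1 : Integrable φ) (x : ℝ) :
    |exp (-x) * AA φ x| ≤ ∫ s, |φ s| := by
  rw [AA, ← integral_const_mul]
  calc |∫ s in Set.Iic x, exp (-x) * (exp s * φ s)|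
      ≤ ∫ s in Set.Iic x, |exp (-x) * (exp s * φ s)| := by
        simpa only [Real.norm_eq_abs] using
          norm_integral_le_integral_norm (μ := volume.restrict (Set.Iic x))
            (fun s => exp (-x) * (exp s * φ s))
    _ ≤ ∫ s in Set.Iic x, |φ s| := by
        refine setIntegral_mono_on (((hIA hc h1 x).const_mul _).abs) (h1.abs.restrict)
          measurableSet_Iic fun s hs => ?_
        rw [abs_mul, abs_mul, abs_exp, abs_exp, ← mul_assoc, ← Real.exp_add]
        have : exp (-x + s) ≤ 1 := exp_le_one_iff.2 (by simpa using hs)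
        nlinarith [abs_nonneg (φ s), exp_pos (-x + s)]
    _ ≤ ∫ s, |φ s| := setIntegral_le_integral h1.abs (Eventually.of_forall fun s => abs_nonneg _)

private lemma hBb (hc : Continuous φ) (h1 : Integrable φ) (x : ℝ) :
    |exp x * BB φ x| ≤ ∫ s, |φ s| := by
  rw [BB, ← integral_const_mul]
  calc |∫ s in Set.Ioi x, exp x * (exp (-s) * φ s)|
      ≤ ∫ s in Set.Ioi x, |exp x * (exp (-s) * φ s)| := by
        simpa only [Real.norm_eq_abs] using
          norm_integral_le_integral_norm (μ := volume.restrict (Set.Ioi x))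
            (fun s => exp x * (exp (-s) * φ s))
    _ ≤ ∫ s in Set.Ioi x, |φ s| := by
        refine setIntegral_mono_on (((hIB hc h1 x).const_mul _).abs) (h1.abs.restrict)
          measurableSet_Ioi fun s hs => ?_
        rw [abs_mul, abs_mul, abs_exp, abs_exp, ← mul_assoc, ← Real.exp_add]
        have : exp (x + -s) ≤ 1 := exp_le_one_iff.2 (by simp at hs ⊢; linarith)
        nlinarith [abs_nonneg (φ s), exp_pos (x + -s)]
    _ ≤ ∫ s, |φ s| := setIntegral_le_integral h1.abs (Eventually.of_forall fun s => abs_nonneg _)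

private lemma hwb (hc : Continuous φ) (h1 : Integrable φ) (x : ℝ) :
    |ww φ x| ≤ ∫ s, |φ s| := by
  have ha := hAb hc h1 x
  have hb := hBb hc h1 x
  rw [ww, abs_div, abs_two]
  have := (abs_add_le (exp (-x) * AA φ x) (exp x * BB φ x))
  linarith

private lemma hw1b (hc : Continuous φ) (h1 : Integrable φ) (x : ℝ) :
    |ww1 φ x| ≤ ∫ s, |φ s| := by
  have ha := hAb hc h1 x
  have hb := hBb hc h1 x
  rw [ww1, abs_div, abs_two, neg_mul]
  have h3 := (abs_add_le (-(exp (-x) * AA φ x)) (exp x * BB φ x))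
  rw [abs_neg] at h3
  linarith

/-- Equivalence of the nonlocal traveling-wave equation `cφ − φ²/2 = G * φ`
(with `G(x) = exp(−|x|)/2`) and the local equation
`cφ − φ²/2 − cφ″ + φφ″ + φ′² = φ`, for a `C²` profile with `φ, φ′, φ″`
integrable and decaying at infinity. -/
theorem stmt9 (c : ℝ) (φ : ℝ → ℝ) (hφ : ContDiff ℝ 2 φ)
    (h1 : Integrable φ) (h2 : Integrable (deriv φ))
    (h3 : Integrable (deriv (deriv φ)))
    (h4 : Tendsto φ (cocompact ℝ) (nhds 0))
    (h5 : Tendsto (deriv φ) (cocompact ℝ) (nhds 0))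
    (h6 : Tendsto (deriv (deriv φ)) (cocompact ℝ) (nhds 0)) :
    (∀ x, c * φ x - (φ x)^2/2 = ∫ s, (exp (-|x - s|)/2) * φ s) ↔
    (∀ x, c * φ x - (φ x)^2/2 - c * deriv (deriv φ) x
        + φ x * deriv (deriv φ) x + (deriv φ x)^2 = φ x) := by
  have hφc : Continuous φ := hφ.continuous
  have hφd : Differentiable ℝ φ := hφ.differentiable two_ne_zero
  have h2' : ContDiff ℝ 1 (deriv φ) :=
    (contDiff_succ_iff_deriv.mp (show ContDiff ℝ (1 + 1) φ by exact_mod_cast hφ)).2.2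
  have hφ'c : Continuous (deriv φ) := h2'.continuous
  have hφ'd : Differentiable ℝ (deriv φ) := h2'.differentiable one_ne_zero
  have hdφ : ∀ x, HasDerivAt φ (deriv φ x) x := fun x => (hφd x).hasDerivAt
  have hdφ' : ∀ x, HasDerivAt (deriv φ) (deriv (deriv φ) x) x := fun x => (hφ'd x).hasDerivAt
  have hu : ∀ x, HasDerivAt (fun y => c * φ y - (φ y) ^ 2 / 2)
      (c * deriv φ x - φ x * deriv φ x) x := fun x => by
    have h := ((hdφ x).const_mul c).sub (((hdφ x).pow 2).div_const 2)
    exact h.congr_deriv (by ring)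
  have hu1 : ∀ x, HasDerivAt (fun y => c * deriv φ y - φ y * deriv φ y)
      (c * deriv (deriv φ) x - (deriv φ x * deriv φ x + φ x * deriv (deriv φ) x)) x :=
    fun x => ((hdφ' x).const_mul c).sub ((hdφ x).mul (hdφ' x))
  constructor
  · intro hnl x
    have huw : (fun y => c * φ y - (φ y) ^ 2 / 2) = ww φ :=
      funext fun y => (hnl y).trans (hwW hφc h1 y)
    have hder : ∀ y, c * deriv φ y - φ y * deriv φ y = ww1 φ y := fun y => by
      have d1 := (hu y).deriv
      rw [huw] at d1
      rw [← d1]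
      exact (hw hφc h1 y).deriv
    have hder2 : c * deriv (deriv φ) x
        - (deriv φ x * deriv φ x + φ x * deriv (deriv φ) x) = ww φ x - φ x := by
      have d1 := (hu1 x).deriv
      rw [funext hder] at d1
      rw [← d1]
      exact (hw1 hφc h1 x).deriv
    have hwwx : ww φ x = c * φ x - (φ x) ^ 2 / 2 := (congrFun huw x).symm
    have hsq : deriv φ x ^ 2 = deriv φ x * deriv φ x := pow_two _
    linarith
  · intro hloc x
    obtain ⟨M0, hM0⟩ := myBdd hφc h4
    obtain ⟨M1, hM1⟩ := myBdd hφ'c h5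
    have hM0n : 0 ≤ M0 := le_trans (abs_nonneg _) (hM0 0)
    have hM1n : 0 ≤ M1 := le_trans (abs_nonneg _) (hM1 0)
    have hIn : 0 ≤ ∫ s, |φ s| := integral_nonneg fun s => abs_nonneg _
    set M : ℝ := |c| * M0 + M0 * M0 / 2 + (|c| * M1 + M0 * M1) + ∫ s, |φ s| with hMdef
    have hv : ∀ y, HasDerivAt (fun z => (c * φ z - (φ z) ^ 2 / 2) - ww φ z)
        ((c * deriv φ y - φ y * deriv φ y) - ww1 φ y) y :=
      fun y => (hu y).sub (hw hφc h1 y)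
    have hv1 : ∀ y, HasDerivAt (fun z => (c * deriv φ z - φ z * deriv φ z) - ww1 φ z)
        ((c * φ y - (φ y) ^ 2 / 2) - ww φ y) y := fun y => by
      have h := (hu1 y).sub (hw1 hφc h1 y)
      refine h.congr_deriv ?_
      have hl := hloc y
      have hsq : deriv φ y ^ 2 = deriv φ y * deriv φ y := pow_two _
      linarith
    have hbv : ∀ y, |(c * φ y - (φ y) ^ 2 / 2) - ww φ y| ≤ M := fun y => by
      have h0 := hM0 y
      have hwby := hwb hφc h1 y
      have habs : |(c * φ y - (φ y) ^ 2 / 2) - ww φ y|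
          ≤ |c * φ y - (φ y) ^ 2 / 2| + |ww φ y| := abs_sub _ _
      have hq : |c * φ y - (φ y) ^ 2 / 2| ≤ |c| * |φ y| + |φ y| * |φ y| / 2 := by
        calc |c * φ y - (φ y) ^ 2 / 2| ≤ |c * φ y| + |(φ y) ^ 2 / 2| := abs_sub _ _
          _ = |c| * |φ y| + |φ y| * |φ y| / 2 := by
              rw [abs_mul, abs_div, abs_two, abs_pow, pow_two]
      have hcm : |c| * |φ y| ≤ |c| * M0 := mul_le_mul_of_nonneg_left h0 (abs_nonneg c)
      have hsqm : |φ y| * |φ y| ≤ M0 * M0 := mul_self_le_mul_self (abs_nonneg _) h0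
      have hextra : 0 ≤ |c| * M1 + M0 * M1 :=
        add_nonneg (mul_nonneg (abs_nonneg c) hM1n) (mul_nonneg hM0n hM1n)
      rw [hMdef]
      linarith
    have hbv1 : ∀ y, |(c * deriv φ y - φ y * deriv φ y) - ww1 φ y| ≤ M := fun y => by
      have h0 := hM0 y
      have h1' := hM1 y
      have hwby := hw1b hφc h1 y
      have habs : |(c * deriv φ y - φ y * deriv φ y) - ww1 φ y|
          ≤ |c * deriv φ y - φ y * deriv φ y| + |ww1 φ y| := abs_sub _ _
      have hq : |c * deriv φ y - φ y * deriv φ y|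
          ≤ |c| * |deriv φ y| + |φ y| * |deriv φ y| := by
        calc |c * deriv φ y - φ y * deriv φ y|
            ≤ |c * deriv φ y| + |φ y * deriv φ y| := abs_sub _ _
          _ = |c| * |deriv φ y| + |φ y| * |deriv φ y| := by rw [abs_mul, abs_mul]
      have hcm : |c| * |deriv φ y| ≤ |c| * M1 := mul_le_mul_of_nonneg_left h1' (abs_nonneg c)
      have hmm : |φ y| * |deriv φ y| ≤ M0 * M1 :=
        mul_le_mul h0 h1' (abs_nonneg _) hM0n
      have hextra : 0 ≤ |c| * M0 + M0 * M0 / 2 :=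
        add_nonneg (mul_nonneg (abs_nonneg c) hM0n) (by nlinarith)
      rw [hMdef]
      linarith
    have hz := odeZero hv hv1 hbv hbv1
    rw [hwW hφc h1 x]
    linarith [hz x]
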